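/- Assume A_q = exp(hH) and that Q − P + A_qᵀ P A_q is negative definite. Let x, r ∈ ℝ^n, let U* ∈ 𝒰^N minimize J(x, r, ·) over 𝒰^N with first element u*_0, and set x⁺ = A_q x + h B_q u*_0, r⁺ = exp(hH) r. If V(x⁺, r⁺) = V(x, r), then u*_0 = 0, x = r, and consequently V(x, r) = 0. -/

import Mathlib

open Matrix Filter Topology

/-- Predicted states of the quantized system: `x₀ = x`, `x_{i+1} = A_q x_i + h B_q u_i`
(inputs beyond the horizon are taken to be `0`, but they are never used below). -/
noncomputable def predState {n m N : ℕ} (Aq : Matrix (Fin n) (Fin n) ℝ)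
    (Bq : Matrix (Fin n) (Fin m) ℝ) (h : ℝ) (x : Fin n → ℝ)
    (U : Fin N → Fin m → ℝ) : ℕ → (Fin n → ℝ)
  | 0 => x
  | i + 1 => Aq *ᵥ (predState Aq Bq h x U i) +
      h • (Bq *ᵥ (if hi : i < N then U ⟨i, hi⟩ else 0))

/-- Reference states: `r_i = (exp (h H))^i r`. -/
noncomputable def refState {n : ℕ} (H : Matrix (Fin n) (Fin n) ℝ) (h : ℝ)
    (r : Fin n → ℝ) (i : ℕ) : Fin n → ℝ :=
  ((NormedSpace.exp (h • H)) ^ i) *ᵥ r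

/-- The MPC cost
`J(x, r, U) = (x_N - r_N)ᵀ P (x_N - r_N) + Σ_{i<N} [(x_i - r_i)ᵀ Q (x_i - r_i) + u_iᵀ R u_i]`. -/
noncomputable def mpcCost {n m N : ℕ} (Aq : Matrix (Fin n) (Fin n) ℝ)
    (Bq : Matrix (Fin n) (Fin m) ℝ) (H : Matrix (Fin n) (Fin n) ℝ) (h : ℝ)
    (P Q : Matrix (Fin n) (Fin n) ℝ) (R : Matrix (Fin m) (Fin m) ℝ)
    (x r : Fin n → ℝ) (U : Fin N → Fin m → ℝ) : ℝ :=
  (predState Aq Bq h x U N - refState H h r N) ⬝ᵥ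
      (P *ᵥ (predState Aq Bq h x U N - refState H h r N)) +
    ∑ i : Fin N,
      ((predState Aq Bq h x U i - refState H h r i) ⬝ᵥ
          (Q *ᵥ (predState Aq Bq h x U i - refState H h r i)) +
        (U i) ⬝ᵥ (R *ᵥ (U i)))

/-- The quantized input set `𝒰^N` with `𝒰 = {-1,0,1}^m`. -/
def quantSet (m N : ℕ) : Set (Fin N → Fin m → ℝ) :=
  {U | ∀ i j, U i j = -1 ∨ U i j = 0 ∨ U i j = 1}

/-- The value function `V(x,r) = min_{U ∈ 𝒰^N} J(x,r,U)`. -/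
noncomputable def valueFn {n m N : ℕ} (Aq : Matrix (Fin n) (Fin n) ℝ)
    (Bq : Matrix (Fin n) (Fin m) ℝ) (H : Matrix (Fin n) (Fin n) ℝ) (h : ℝ)
    (P Q : Matrix (Fin n) (Fin n) ℝ) (R : Matrix (Fin m) (Fin m) ℝ)
    (x r : Fin n → ℝ) : ℝ :=
  sInf ((fun U => mpcCost Aq Bq H h P Q R x r U) '' quantSet m N)

/-- The shifted input sequence: drop `u₀` and append `0`. -/
def shiftSeq {m N : ℕ} (U : Fin N → Fin m → ℝ) : Fin N → Fin m → ℝ :=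
  fun i => if hi : (i : ℕ) + 1 < N then U ⟨(i : ℕ) + 1, hi⟩ else 0

section Helpers

variable {n m N : ℕ}

lemma quad_nn {k : ℕ} {M : Matrix (Fin k) (Fin k) ℝ} (hM : M.PosSemidef) (v : Fin k → ℝ) :
    0 ≤ v ⬝ᵥ (M *ᵥ v) := by simpa using hM.dotProduct_mulVec_nonneg v

lemma quad_eq_zero {k : ℕ} {M : Matrix (Fin k) (Fin k) ℝ} (hM : M.PosDef) {v : Fin k → ℝ}
    (hv : v ⬝ᵥ (M *ᵥ v) = 0) : v = 0 := by
  by_contra hne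
  have := hM.dotProduct_mulVec_pos hne
  simp only [star_trivial] at this
  exact absurd hv (ne_of_gt this)

@[simp] lemma predState_zero (Aq : Matrix (Fin n) (Fin n) ℝ) (Bq : Matrix (Fin n) (Fin m) ℝ)
    (h : ℝ) (x : Fin n → ℝ) (U : Fin N → Fin m → ℝ) : predState Aq Bq h x U 0 = x := rfl

lemma predState_succ (Aq : Matrix (Fin n) (Fin n) ℝ) (Bq : Matrix (Fin n) (Fin m) ℝ)
    (h : ℝ) (x : Fin n → ℝ) (U : Fin N → Fin m → ℝ) (i : ℕ) :
    predState Aq Bq h x U (i + 1) = Aq *ᵥ (predState Aq Bq h x U i) +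
      h • (Bq *ᵥ (if hi : i < N then U ⟨i, hi⟩ else 0)) := rfl

lemma refState_succ (H : Matrix (Fin n) (Fin n) ℝ) (h : ℝ) (r : Fin n → ℝ) (i : ℕ) :
    refState H h r (i + 1) = NormedSpace.exp (h • H) *ᵥ refState H h r i := by
  simp [refState, pow_succ']

lemma refState_shift (H : Matrix (Fin n) (Fin n) ℝ) (h : ℝ) (r : Fin n → ℝ) (i : ℕ) :
    refState H h (NormedSpace.exp (h • H) *ᵥ r) i = refState H h r (i + 1) := by
  simp [refState, pow_succ]

lemma predState_shift (hN : 0 < N) (Aq : Matrix (Fin n) (Fin n) ℝ)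
    (Bq : Matrix (Fin n) (Fin m) ℝ) (h : ℝ) (x : Fin n → ℝ) (U : Fin N → Fin m → ℝ) (i : ℕ) :
    predState Aq Bq h (Aq *ᵥ x + h • (Bq *ᵥ U ⟨0, hN⟩)) (shiftSeq U) i
      = predState Aq Bq h x U (i + 1) := by
  induction i with
  | zero => rw [predState_succ, dif_pos hN]; rfl
  | succ i ih =>
      rw [predState_succ, predState_succ, ih]
      have harg : (if hi : i < N then shiftSeq U ⟨i, hi⟩ else 0)
          = (if hi : i + 1 < N then U ⟨i + 1, hi⟩ else 0) := by
        by_cases hi : i < N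
        · rw [dif_pos hi]; rfl
        · rw [dif_neg hi, dif_neg (by omega)]
      rw [harg]

lemma quad_mulVec (A P : Matrix (Fin n) (Fin n) ℝ) (v : Fin n → ℝ) :
    (A *ᵥ v) ⬝ᵥ (P *ᵥ (A *ᵥ v)) = v ⬝ᵥ ((Aᵀ * P * A) *ᵥ v) := by
  conv_rhs => rw [Matrix.mul_assoc, ← Matrix.mulVec_mulVec, Matrix.dotProduct_mulVec,
    Matrix.vecMul_transpose, ← Matrix.mulVec_mulVec]

lemma shiftSeq_mem {U : Fin N → Fin m → ℝ} (hU : U ∈ quantSet m N) :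
    shiftSeq U ∈ quantSet m N := by
  intro i j
  unfold shiftSeq
  split
  · exact hU _ _
  · exact Or.inr (Or.inl rfl)

lemma zero_mem_quantSet : (fun _ _ => 0 : Fin N → Fin m → ℝ) ∈ quantSet m N :=
  fun _ _ => Or.inr (Or.inl rfl)

lemma mpcCost_nonneg {Aq H : Matrix (Fin n) (Fin n) ℝ} {Bq : Matrix (Fin n) (Fin m) ℝ}
    {h : ℝ} {P Q : Matrix (Fin n) (Fin n) ℝ} {R : Matrix (Fin m) (Fin m) ℝ}
    (hP : P.PosSemidef) (hQ : Q.PosSemidef) (hR : R.PosSemidef)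
    (x r : Fin n → ℝ) (U : Fin N → Fin m → ℝ) :
    0 ≤ mpcCost Aq Bq H h P Q R x r U :=
  add_nonneg (quad_nn hP _)
    (Finset.sum_nonneg fun _ _ => add_nonneg (quad_nn hQ _) (quad_nn hR _))

lemma valueFn_le {Aq H : Matrix (Fin n) (Fin n) ℝ} {Bq : Matrix (Fin n) (Fin m) ℝ}
    {h : ℝ} {P Q : Matrix (Fin n) (Fin n) ℝ} {R : Matrix (Fin m) (Fin m) ℝ}
    (hP : P.PosSemidef) (hQ : Q.PosSemidef) (hR : R.PosSemidef)
    (x r : Fin n → ℝ) {U : Fin N → Fin m → ℝ} (hU : U ∈ quantSet m N) :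
    valueFn (N := N) Aq Bq H h P Q R x r ≤ mpcCost Aq Bq H h P Q R x r U :=
  csInf_le ⟨0, fun y ⟨V, hV, hy⟩ => hy ▸ mpcCost_nonneg hP hQ hR x r V⟩ ⟨U, hU, rfl⟩

lemma valueFn_nonneg {Aq H : Matrix (Fin n) (Fin n) ℝ} {Bq : Matrix (Fin n) (Fin m) ℝ}
    {h : ℝ} {P Q : Matrix (Fin n) (Fin n) ℝ} {R : Matrix (Fin m) (Fin m) ℝ}
    (hP : P.PosSemidef) (hQ : Q.PosSemidef) (hR : R.PosSemidef)
    (x r : Fin n → ℝ) :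
    0 ≤ valueFn (N := N) (m := m) Aq Bq H h P Q R x r :=
  le_csInf ⟨_, ⟨(fun _ _ => 0), zero_mem_quantSet, rfl⟩⟩
    (fun y ⟨V, hV, hy⟩ => hy ▸ mpcCost_nonneg hP hQ hR x r V)

end Helpers

/-- equality case: if the value function does not decrease over one closed-loop
step, then the applied optimal input is zero, `x = r`, and `V(x,r) = 0`. -/
theorem stmt7 {n m N : ℕ} (hN : 0 < N) (h : ℝ) (hh : 0 < h)
    (Aq H : Matrix (Fin n) (Fin n) ℝ) (Bq : Matrix (Fin n) (Fin m) ℝ)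
    (P Q : Matrix (Fin n) (Fin n) ℝ) (R : Matrix (Fin m) (Fin m) ℝ)
    (hP : P.PosDef) (hQ : Q.PosDef) (hR : R.PosDef)
    (hA : Aq = NormedSpace.exp (h • H))
    (hneg : (-(Q - P + Aqᵀ * P * Aq)).PosDef)
    (x r : Fin n → ℝ) (Ustar : Fin N → Fin m → ℝ)
    (hmem : Ustar ∈ quantSet m N)
    (hmin : ∀ U ∈ quantSet m N,
      mpcCost Aq Bq H h P Q R x r Ustar ≤ mpcCost Aq Bq H h P Q R x r U)
    (heq : valueFn (N := N) Aq Bq H h P Q R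
        (Aq *ᵥ x + h • (Bq *ᵥ Ustar ⟨0, hN⟩))
        (NormedSpace.exp (h • H) *ᵥ r) =
      valueFn (N := N) Aq Bq H h P Q R x r) :
    Ustar ⟨0, hN⟩ = 0 ∧ x = r ∧ valueFn (N := N) Aq Bq H h P Q R x r = 0 := by
  classical
  -- abbreviations
  set e : ℕ → Fin n → ℝ :=
    fun i => predState Aq Bq h x Ustar i - refState H h r i with he
  set uIn : ℕ → Fin m → ℝ :=
    fun i => if hi : i < N then Ustar ⟨i, hi⟩ else 0 with huIn
  set F : ℕ → ℝ :=
    fun i => (e i) ⬝ᵥ (Q *ᵥ (e i)) + (uIn i) ⬝ᵥ (R *ᵥ (uIn i)) with hF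
  -- the cost of Ustar in range form
  have hJ : mpcCost Aq Bq H h P Q R x r Ustar
      = (e N) ⬝ᵥ (P *ᵥ (e N)) + ∑ i ∈ Finset.range N, F i := by
    unfold mpcCost
    congr 1
    rw [← Fin.sum_univ_eq_sum_range F]
    refine Finset.sum_congr rfl fun i _ => ?_
    simp only [hF, he, huIn, dif_pos i.isLt, Fin.eta]
  -- the cost of the shifted sequence in range form
  have hpredN1 : predState Aq Bq h x Ustar (N + 1) = Aq *ᵥ predState Aq Bq h x Ustar N := by
    rw [predState_succ, dif_neg (lt_irrefl N), Matrix.mulVec_zero, smul_zero, add_zero]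
  have hJ' : mpcCost Aq Bq H h P Q R (Aq *ᵥ x + h • (Bq *ᵥ Ustar ⟨0, hN⟩))
        (NormedSpace.exp (h • H) *ᵥ r) (shiftSeq Ustar)
      = (e N) ⬝ᵥ ((Aqᵀ * P * Aq) *ᵥ (e N)) + ∑ i ∈ Finset.range N, F (i + 1) := by
    unfold mpcCost
    congr 1
    · rw [predState_shift hN, refState_shift, hpredN1, refState_succ, ← hA,
        ← Matrix.mulVec_sub, quad_mulVec]
    · rw [← Fin.sum_univ_eq_sum_range (fun i => F (i + 1))]
      refine Finset.sum_congr rfl fun i _ => ?_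
      rw [predState_shift hN, refState_shift]
      have hss : shiftSeq Ustar i = uIn ((i : ℕ) + 1) := by
        simp only [shiftSeq, huIn]
      simp only [hF, he, hss]
  -- sum shift identity
  have hshift : ∑ i ∈ Finset.range N, F (i + 1)
      = (∑ i ∈ Finset.range N, F i) + F N - F 0 := by
    have h1 := Finset.sum_range_succ' F N
    have h2 := Finset.sum_range_succ F N
    linarith
  have hFN : F N = (e N) ⬝ᵥ (Q *ᵥ (e N)) := by
    simp only [hF, huIn, dif_neg (lt_irrefl N)]
    simp
  have hF0 : F 0 = (e 0) ⬝ᵥ (Q *ᵥ (e 0)) + (Ustar ⟨0, hN⟩) ⬝ᵥ (R *ᵥ (Ustar ⟨0, hN⟩)) := by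
    simp only [hF, huIn, dif_pos hN]
  -- key quadratic identity for the negative-definite matrix
  have hEquad : (e N) ⬝ᵥ ((-(Q - P + Aqᵀ * P * Aq)) *ᵥ (e N))
      = (e N) ⬝ᵥ (P *ᵥ (e N)) - (e N) ⬝ᵥ ((Aqᵀ * P * Aq) *ᵥ (e N))
        - (e N) ⬝ᵥ (Q *ᵥ (e N)) := by
    simp only [Matrix.neg_mulVec, Matrix.add_mulVec, Matrix.sub_mulVec,
      dotProduct_neg, dotProduct_add, dotProduct_sub]
    ring
  -- V(x,r) equals the optimal cost
  have hVeq : valueFn (N := N) Aq Bq H h P Q R x r = mpcCost Aq Bq H h P Q R x r Ustar := by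
    refine le_antisymm (valueFn_le hP.posSemidef hQ.posSemidef hR.posSemidef x r hmem) ?_
    exact le_csInf ⟨_, Ustar, hmem, rfl⟩ (fun y ⟨V, hV, hy⟩ => hy ▸ hmin V hV)
  -- V(x⁺, r⁺) ≤ J'(shifted)
  have hVle : valueFn (N := N) Aq Bq H h P Q R (Aq *ᵥ x + h • (Bq *ᵥ Ustar ⟨0, hN⟩))
        (NormedSpace.exp (h • H) *ᵥ r)
      ≤ mpcCost Aq Bq H h P Q R (Aq *ᵥ x + h • (Bq *ᵥ Ustar ⟨0, hN⟩))
        (NormedSpace.exp (h • H) *ᵥ r) (shiftSeq Ustar) :=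
    valueFn_le hP.posSemidef hQ.posSemidef hR.posSemidef _ _ (shiftSeq_mem hmem)
  -- combine: the decrease amount is ≤ 0
  have hkey : (e N) ⬝ᵥ ((-(Q - P + Aqᵀ * P * Aq)) *ᵥ (e N))
      + (e 0) ⬝ᵥ (Q *ᵥ (e 0)) + (Ustar ⟨0, hN⟩) ⬝ᵥ (R *ᵥ (Ustar ⟨0, hN⟩)) ≤ 0 := by
    have hc : mpcCost Aq Bq H h P Q R x r Ustar
        ≤ mpcCost Aq Bq H h P Q R (Aq *ᵥ x + h • (Bq *ᵥ Ustar ⟨0, hN⟩))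
          (NormedSpace.exp (h • H) *ᵥ r) (shiftSeq Ustar) := by
      rw [← hVeq, ← heq]; exact hVle
    rw [hJ, hJ', hshift, hFN, hF0] at hc
    rw [hEquad]
    linarith
  have t1 : 0 ≤ (e N) ⬝ᵥ ((-(Q - P + Aqᵀ * P * Aq)) *ᵥ (e N)) := quad_nn hneg.posSemidef _
  have t2 : 0 ≤ (e 0) ⬝ᵥ (Q *ᵥ (e 0)) := quad_nn hQ.posSemidef _
  have t3 : 0 ≤ (Ustar ⟨0, hN⟩) ⬝ᵥ (R *ᵥ (Ustar ⟨0, hN⟩)) := quad_nn hR.posSemidef _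
  have hu0 : Ustar ⟨0, hN⟩ = 0 := quad_eq_zero hR (by linarith)
  have he0 : e 0 = 0 := quad_eq_zero hQ (by linarith)
  have hxr : x = r := by
    have : predState Aq Bq h x Ustar 0 - refState H h r 0 = 0 := he0
    simp only [predState_zero, refState, pow_zero, Matrix.one_mulVec] at this
    exact sub_eq_zero.mp this
  refine ⟨hu0, hxr, ?_⟩
  -- with x = r, the zero input gives zero cost
  have hzero : ∀ i, predState Aq Bq h x (fun _ _ => 0 : Fin N → Fin m → ℝ) i
      = refState H h r i := by
    intro i
    induction i with
    | zero => simp [refState, hxr]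
    | succ i ih =>
        rw [predState_succ, ih, refState_succ, ← hA]
        have : (if hi : i < N then (fun _ _ => 0 : Fin N → Fin m → ℝ) ⟨i, hi⟩ else 0)
            = (0 : Fin m → ℝ) := by split <;> rfl
        rw [this, Matrix.mulVec_zero, smul_zero, add_zero]
  have hcost0 : mpcCost Aq Bq H h P Q R x r (fun _ _ => 0 : Fin N → Fin m → ℝ) = 0 := by
    unfold mpcCost
    rw [hzero]
    simp [hzero]
  refine le_antisymm ?_ (valueFn_nonneg hP.posSemidef hQ.posSemidef hR.posSemidef x r)
  calc valueFn (N := N) Aq Bq H h P Q R x r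
      ≤ mpcCost Aq Bq H h P Q R x r (fun _ _ => 0 : Fin N → Fin m → ℝ) :=
        valueFn_le hP.posSemidef hQ.posSemidef hR.posSemidef x r zero_mem_quantSet
    _ = 0 := hcost0
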